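/- If ρ is a separable state on ℂ^d ⊗ ℂ^d (a convex combination of tensor products of states), then its partial transpose ρ^Γ = (Id ⊗ T)(ρ) is positive semidefinite. -/

import Mathlib

open Matrix Kronecker ComplexOrder

/-- The partial transposition `(A^Γ)_{i,j}^{k,l} = A_{i,j}^{l,k}`, i.e.
`A^Γ = (Id ⊗ T)(A)` where `T` is transposition on the second factor. -/
def partialTranspose {d : ℕ} (A : Matrix (Fin d × Fin d) (Fin d × Fin d) ℂ) :
    Matrix (Fin d × Fin d) (Fin d × Fin d) ℂ :=
  Matrix.of fun p q => A (p.1, q.2) (q.1, p.2)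

lemma kronecker_conjTranspose' {d : ℕ} (A B : Matrix (Fin d) (Fin d) ℂ) :
    (A ⊗ₖ B)ᴴ = Aᴴ ⊗ₖ Bᴴ := by
  ext ⟨i, j⟩ ⟨k, l⟩
  simp [Matrix.conjTranspose_apply, Matrix.kroneckerMap_apply, mul_comm]

lemma kronecker_posSemidef {d : ℕ} {A B : Matrix (Fin d) (Fin d) ℂ}
    (hA : A.PosSemidef) (hB : B.PosSemidef) : (A ⊗ₖ B).PosSemidef := by
  exact hA.kronecker hB

lemma partialTranspose_kronecker {d : ℕ} (A B : Matrix (Fin d) (Fin d) ℂ) :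
    partialTranspose (A ⊗ₖ B) = A ⊗ₖ Bᵀ := by
  ext ⟨i, j⟩ ⟨k, l⟩
  simp [partialTranspose, Matrix.kroneckerMap_apply, Matrix.transpose_apply]

lemma smul_posSemidef {n : Type*} [Fintype n] [DecidableEq n] {r : ℝ} (hr : 0 ≤ r)
    {A : Matrix n n ℂ} (hA : A.PosSemidef) :
    ((r : ℂ) • A).PosSemidef := by
  constructor
  · unfold Matrix.IsHermitian
    rw [Matrix.conjTranspose_smul, hA.1.eq]
    congr 1
    simp
  · intro x
    exact (hA.smul (by exact_mod_cast hr : (0 : ℂ) ≤ (r : ℂ))).2 x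

/-- Peres: the partial transpose of a separable state on `ℂ^d ⊗ ℂ^d` is
positive semidefinite. A separable state is a finite convex combination
`∑ pᵢ σᵢ ⊗ τᵢ` of tensor products of states (positive semidefinite, trace 1). -/
theorem separable_state_ppt (d m : ℕ)
    (p : Fin m → ℝ) (σ τ : Fin m → Matrix (Fin d) (Fin d) ℂ)
    (hp : ∀ i, 0 ≤ p i) (hpsum : ∑ i, p i = 1)
    (hσ : ∀ i, (σ i).PosSemidef) (hστr : ∀ i, (σ i).trace = 1)
    (hτ : ∀ i, (τ i).PosSemidef) (hτtr : ∀ i, (τ i).trace = 1)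
    (ρ : Matrix (Fin d × Fin d) (Fin d × Fin d) ℂ)
    (hρ : ρ = ∑ i, (p i : ℂ) • (σ i ⊗ₖ τ i)) :
    (partialTranspose ρ).PosSemidef := by
  have hlin : partialTranspose ρ = ∑ i, (p i : ℂ) • (σ i ⊗ₖ (τ i)ᵀ) := by
    subst hρ
    ext ⟨i, j⟩ ⟨k, l⟩
    simp [partialTranspose, Matrix.sum_apply, Matrix.kroneckerMap_apply,
      Matrix.transpose_apply]
  rw [hlin]
  exact Finset.sum_induction _ Matrix.PosSemidef
    (fun a b ha hb => ha.add hb) Matrix.PosSemidef.zero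
    (fun i _ => smul_posSemidef (hp i) (kronecker_posSemidef (hσ i) (hτ i).transpose))
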